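/- arXiv:1006.0900 — 4 statements merged into one kernel-verified Lean document; each statement's English description precedes it below -/
import Mathlib

section
/- Let μ be a nontrivial probability measure on the unit circle with orthonormal polynomials φ_n. Then for every n ≥ 1 one has the identity ‖φ_n'/n‖² = 1 + ‖(φ_n^*)'/n‖², where ‖·‖ is the L²(dμ) norm. In particular, ‖φ_n'/n‖ ≥ 1 for all n ≥ 1, and μ has normal L²-derivative behavior if and only if ‖(φ_n^*)'/n‖ → 0 as n → ∞. -/
open MeasureTheory Polynomial Filter Topology ComplexConjugate

noncomputable section

/-- The reversed (Szegő `*`-transformed) polynomial of a degree-`n` polynomial: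
`P*(z) = z^n conj(P(1/conj z))`, i.e. the coefficients are conjugated and reversed. -/
def starPoly (n : ℕ) (P : Polynomial ℂ) : Polynomial ℂ :=
  (P.map (starRingEnd ℂ)).reflect n

/-- The `L²(dμ)` norm of a polynomial. -/
def l2norm (μ : Measure ℂ) (P : Polynomial ℂ) : ℝ :=
  (∫ z, ‖P.eval z‖ ^ 2 ∂μ) ^ (1 / 2 : ℝ)

/-- `φ` is the sequence of orthonormal polynomials for the measure `μ`:
`φ n` has degree `n`, a positive (real) leading coefficient, and the family
is orthonormal in `L²(dμ)`. -/
structure IsOPUC (μ : Measure ℂ) (φ : ℕ → Polynomial ℂ) : Prop where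
  deg : ∀ n : ℕ, (φ n).degree = n
  lead_re_pos : ∀ n : ℕ, 0 < ((φ n).leadingCoeff).re
  lead_im_zero : ∀ n : ℕ, ((φ n).leadingCoeff).im = 0
  orth : ∀ m n : ℕ,
    ∫ z, conj ((φ m).eval z) * (φ n).eval z ∂μ = if m = n then 1 else 0

/-- The monic orthogonal polynomials `Φ_n` associated to the orthonormal ones. -/
def monicOP (φ : ℕ → Polynomial ℂ) (n : ℕ) : Polynomial ℂ :=
  Polynomial.C ((φ n).leadingCoeff)⁻¹ * φ n

/-- The Verblunsky coefficients `α_n = -conj (Φ_{n+1}(0))`. -/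
def verblunsky (φ : ℕ → Polynomial ℂ) (n : ℕ) : ℂ :=
  -conj ((monicOP φ (n + 1)).eval 0)

/-- The measure lives on the unit circle `∂𝔻`. -/
def OnCircle (μ : Measure ℂ) : Prop := μ (Metric.sphere (0 : ℂ) 1)ᶜ = 0

/-- The measure is nontrivial: it is not supported on any finite set
(equivalently, its support is infinite). -/
def NontrivialSupport (μ : Measure ℂ) : Prop :=
  ∀ s : Finset ℂ, μ ((↑s : Set ℂ))ᶜ ≠ 0

/-- `μ` has normal `L²`-derivative behavior: `‖φ_n'‖_{L²(dμ)} / n → 1`. -/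
def NormalBehavior (μ : Measure ℂ) (φ : ℕ → Polynomial ℂ) : Prop :=
  Tendsto (fun n : ℕ => l2norm μ (derivative (φ n)) / n) atTop (𝓝 1)

/-! ### Auxiliary algebraic lemmas -/

lemma starPoly_coeff (n : ℕ) (P : Polynomial ℂ) (i : ℕ) :
    (starPoly n P).coeff i = conj (P.coeff (revAt n i)) := by
  simp [starPoly, coeff_reflect, coeff_map]

lemma starPoly_starPoly (n : ℕ) (P : Polynomial ℂ) : starPoly n (starPoly n P) = P := by
  ext i
  simp [starPoly_coeff, revAt_invol]

lemma natDegree_starPoly_le {n : ℕ} {P : Polynomial ℂ} (h : P.natDegree ≤ n) :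
    (starPoly n P).natDegree ≤ n := by
  apply Polynomial.natDegree_le_iff_coeff_eq_zero.2
  intro m hm
  rw [starPoly_coeff, Polynomial.revAt_eq_self_of_lt hm,
    Polynomial.coeff_eq_zero_of_natDegree_lt (lt_of_le_of_lt h hm), map_zero]

lemma key_poly_identity (m : ℕ) (P : Polynomial ℂ) (h : P.natDegree ≤ m + 1) :
    starPoly m (derivative P)
      = Polynomial.C ((m + 1 : ℕ) : ℂ) * starPoly (m + 1) P
        - Polynomial.X * derivative (starPoly (m + 1) P) := by
  ext i
  rcases i with _ | j
  · rw [Polynomial.coeff_sub, Polynomial.coeff_C_mul, starPoly_coeff, starPoly_coeff]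
    simp only [Polynomial.mul_coeff_zero, Polynomial.coeff_X_zero, zero_mul, sub_zero]
    rw [Polynomial.revAt_le (Nat.zero_le m), Polynomial.revAt_le (Nat.zero_le (m+1)),
      Nat.sub_zero, Nat.sub_zero, Polynomial.coeff_derivative]
    simp only [map_add, map_mul, map_natCast, map_one]
    push_cast
    ring
  · rw [Polynomial.coeff_sub, Polynomial.coeff_C_mul, starPoly_coeff, starPoly_coeff,
      Polynomial.coeff_X_mul, Polynomial.coeff_derivative, Polynomial.coeff_derivative,
      starPoly_coeff]
    rcases le_or_gt (j + 1) m with hle | hgt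
    · rw [Polynomial.revAt_le hle, Polynomial.revAt_le (by omega : j + 1 ≤ m + 1)]
      have e1 : m - (j + 1) + 1 = m + 1 - (j + 1) := by omega
      rw [e1]
      simp only [map_add, map_mul, map_natCast, map_one]
      push_cast [Nat.cast_sub (by omega : j + 1 ≤ m), Nat.cast_sub (by omega : j + 1 ≤ m + 1)]
      ring
    · rcases eq_or_lt_of_le (by omega : m + 1 ≤ j + 1) with heq | hgt2
      · have hj : m = j := by omega
        subst hj
        rw [Polynomial.revAt_eq_self_of_lt (by omega : m < m + 1),
          Polynomial.revAt_le (le_refl (m+1)), Nat.sub_self,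
          Polynomial.coeff_eq_zero_of_natDegree_lt (by omega : P.natDegree < m + 1 + 1)]
        simp only [map_zero, zero_mul, map_mul]
        push_cast
        ring
      · rw [Polynomial.revAt_eq_self_of_lt (by omega : m < j + 1),
          Polynomial.revAt_eq_self_of_lt hgt2,
          Polynomial.coeff_eq_zero_of_natDegree_lt (by omega : P.natDegree < j + 1 + 1),
          Polynomial.coeff_eq_zero_of_natDegree_lt (by omega : P.natDegree < j + 1)]
        simp

lemma eval_map_conj (P : Polynomial ℂ) (w : ℂ) :
    (P.map (starRingEnd ℂ)).eval w = conj (P.eval (conj w)) := by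
  induction P using Polynomial.induction_on' with
  | add p q hp hq => simp [hp, hq]
  | monomial n a => simp

lemma starPoly_eval {n : ℕ} {P : Polynomial ℂ} (h : P.natDegree ≤ n) {z : ℂ} (hz : ‖z‖ = 1) :
    (starPoly n P).eval z = z ^ n * conj (P.eval z) := by
  have hz0 : z ≠ 0 := by intro h0; rw [h0] at hz; simp at hz
  have hinv : z⁻¹ = conj z := by
    rw [Complex.inv_def, Complex.normSq_eq_norm_sq]
    simp [hz]
  have : Invertible (z⁻¹) := invertibleOfNonzero (inv_ne_zero hz0)
  have key := Polynomial.eval₂_reflect_mul_pow (RingHom.id ℂ) (z⁻¹) n (P.map (starRingEnd ℂ))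
      (le_trans Polynomial.natDegree_map_le h)
  rw [Polynomial.eval₂_eq_eval_map, Polynomial.eval₂_eq_eval_map, Polynomial.map_id,
    invOf_eq_inv, inv_inv, Polynomial.map_id] at key
  have hc : (starRingEnd ℂ) z⁻¹ = z := by rw [hinv, Complex.conj_conj]
  rw [eval_map_conj, hc] at key
  have hzn : z⁻¹ ^ n ≠ 0 := pow_ne_zero _ (inv_ne_zero hz0)
  rw [show starPoly n P = reflect n (P.map (starRingEnd ℂ)) from rfl]
  field_simp at key ⊢
  rw [← key, div_pow, one_pow, mul_assoc, div_mul_cancel₀ _ (pow_ne_zero _ hz0), mul_one]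

lemma cont_eval (P : Polynomial ℂ) : Continuous fun z : ℂ => P.eval z := P.continuous

lemma cont_conj_eval (P : Polynomial ℂ) : Continuous fun z : ℂ => conj (P.eval z) :=
  Complex.continuous_conj.comp P.continuous

lemma norm_sq_eq_normSq (w : ℂ) : ‖w‖^2 = Complex.normSq w := by
  rw [Complex.normSq_eq_norm_sq]

lemma aux_normsq (u p q r s : ℂ) (hu : Complex.normSq u = 1) (hr : Complex.normSq r = 1) (a : ℝ)
    (e : u * conj p = (a : ℂ) * q - r * s) :
    ‖p‖^2 = a^2 * ‖q‖^2 + ‖s‖^2 - 2*a*(conj q * (r * s)).re := by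
  have h2 := congrArg Complex.normSq e
  rw [Complex.normSq_mul, Complex.normSq_conj, hu, one_mul, Complex.normSq_sub,
    Complex.normSq_mul, Complex.normSq_mul, hr, one_mul, Complex.normSq_ofReal] at h2
  have hre : ((a : ℂ) * q * conj (r * s)).re = a * (conj q * (r * s)).re := by
    have : (conj q * (r * s)).re = (q * conj (r * s)).re := by
      rw [← Complex.conj_re (q * conj (r * s))]
      simp [mul_comm]
    rw [this, mul_assoc, Complex.mul_re]
    simp
  rw [norm_sq_eq_normSq, norm_sq_eq_normSq, norm_sq_eq_normSq, h2, hre]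
  ring

lemma circle_key (m : ℕ) (P : Polynomial ℂ) (h : P.natDegree ≤ m + 1) {z : ℂ} (hz : ‖z‖ = 1) :
    z ^ m * conj ((derivative P).eval z)
      = ((m + 1 : ℕ) : ℂ) * (starPoly (m + 1) P).eval z
        - z * (derivative (starPoly (m + 1) P)).eval z := by
  have hd : (derivative P).natDegree ≤ m :=
    le_trans (Polynomial.natDegree_derivative_le P) (by omega)
  have hkey := congrArg (Polynomial.eval z) (key_poly_identity m P h)
  rw [starPoly_eval hd hz] at hkey
  simpa using hkey

/-! ### Measure-theoretic lemmas -/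

lemma ae_circle {μ : Measure ℂ} (hcirc : OnCircle μ) : ∀ᵐ z ∂μ, ‖z‖ = 1 := by
  rw [ae_iff]
  have : {z : ℂ | ¬ ‖z‖ = 1} = (Metric.sphere (0 : ℂ) 1)ᶜ := by
    ext z; simp [mem_sphere_zero_iff_norm]
  rw [this]; exact hcirc

lemma integrable_circle {μ : Measure ℂ} [IsProbabilityMeasure μ] (hcirc : OnCircle μ)
    {E : Type*} [NormedAddCommGroup E] {f : ℂ → E} (hf : Continuous f) :
    Integrable f μ := by
  obtain ⟨C, hC⟩ := (isCompact_sphere (0:ℂ) 1).exists_bound_of_continuousOn hf.continuousOn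
  refine Integrable.mono' (integrable_const C) hf.aestronglyMeasurable ?_
  filter_upwards [ae_circle hcirc] with z hz
  exact hC z (by simpa [mem_sphere_zero_iff_norm] using hz)

lemma l2norm_nonneg (μ : Measure ℂ) (P : Polynomial ℂ) : 0 ≤ l2norm μ P :=
  Real.rpow_nonneg (integral_nonneg fun z => by positivity) _

lemma l2norm_sq (μ : Measure ℂ) (P : Polynomial ℂ) :
    (l2norm μ P) ^ 2 = ∫ z, ‖P.eval z‖ ^ 2 ∂μ := by
  have hI : (0:ℝ) ≤ ∫ z, ‖P.eval z‖ ^ 2 ∂μ := integral_nonneg fun z => by positivity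
  rw [l2norm, ← Real.rpow_natCast (_ ^ (1/2:ℝ)) 2, ← Real.rpow_mul hI]
  norm_num

section OP

variable {μ : Measure ℂ} [IsProbabilityMeasure μ] (hcirc : OnCircle μ)
  {φ : ℕ → Polynomial ℂ} (hφ : IsOPUC μ φ)

include hcirc hφ

lemma orth_lower : ∀ d : ℕ, ∀ R : Polynomial ℂ, R.natDegree ≤ d → ∀ n : ℕ, d < n →
    ∫ z, conj ((φ n).eval z) * R.eval z ∂μ = 0 := by
  intro d
  induction d using Nat.strong_induction_on with
  | _ d IH =>
    intro R hR n hdn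
    rcases eq_or_ne R 0 with rfl | hR0
    · simp
    · set k := R.natDegree with hk
      have hlead : ((φ k).leadingCoeff) ≠ 0 := by
        intro h0
        have := hφ.lead_re_pos k
        rw [h0] at this; simp at this
      set c : ℂ := R.leadingCoeff / (φ k).leadingCoeff with hc
      set S : Polynomial ℂ := R - Polynomial.C c * φ k with hS
      have hφdeg : (φ k).natDegree = k := by
        have := hφ.deg k
        exact Polynomial.natDegree_eq_of_degree_eq_some this
      have hSk : S.coeff k = 0 := by
        rw [hS, Polynomial.coeff_sub, Polynomial.coeff_C_mul]
        have : (φ k).coeff k = (φ k).leadingCoeff := by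
          rw [Polynomial.leadingCoeff, hφdeg]
        rw [this, hc, div_mul_cancel₀ _ hlead]
        rw [Polynomial.leadingCoeff, ← hk, sub_self]
      have hSdeg : S.natDegree ≤ k := by
        apply Polynomial.natDegree_sub_le_iff_left ?_ |>.2 le_rfl
        calc (Polynomial.C c * φ k).natDegree ≤ (φ k).natDegree :=
              Polynomial.natDegree_C_mul_le _ _
        _ = k := hφdeg
      have hint1 : Integrable (fun z => conj ((φ n).eval z) * ((Polynomial.C c * φ k).eval z)) μ :=
        integrable_circle hcirc ((cont_conj_eval _).mul (cont_eval _))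
      have hint2 : Integrable (fun z => conj ((φ n).eval z) * S.eval z) μ :=
        integrable_circle hcirc ((cont_conj_eval _).mul (cont_eval _))
      have hsplit : (fun z => conj ((φ n).eval z) * R.eval z)
          = fun z => conj ((φ n).eval z) * ((Polynomial.C c * φ k).eval z)
            + conj ((φ n).eval z) * S.eval z := by
        funext z
        rw [hS]
        simp only [Polynomial.eval_sub]
        ring
      rw [hsplit, integral_add hint1 hint2]
      have e1 : ∫ z, conj ((φ n).eval z) * ((Polynomial.C c * φ k).eval z) ∂μ = 0 := by
        simp only [Polynomial.eval_mul, Polynomial.eval_C]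
        rw [show (fun z => conj ((φ n).eval z) * (c * (φ k).eval z))
            = fun z => c * (conj ((φ n).eval z) * (φ k).eval z) by funext z; ring]
        rw [integral_const_mul, hφ.orth n k, if_neg (by omega), mul_zero]
      have e2 : ∫ z, conj ((φ n).eval z) * S.eval z ∂μ = 0 := by
        rcases eq_or_ne S 0 with h0 | h0
        · simp [h0]
        · have hSlt : S.natDegree < k := by
            rcases lt_or_eq_of_le hSdeg with h | h
            · exact h
            · exfalso; apply h0
              have : S.leadingCoeff = 0 := by rw [Polynomial.leadingCoeff, h, hSk]
              exact Polynomial.leadingCoeff_eq_zero.1 this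
          exact IH S.natDegree (lt_of_lt_of_le hSlt (hk ▸ hR)) S le_rfl n (by omega)
      rw [e1, e2, add_zero]

/-- The central identity: `‖φ_n'‖² = n² + ‖(φ_n^*)'‖²` (as integrals). -/
lemma central (m : ℕ) :
    ∫ z, ‖(derivative (φ (m+1))).eval z‖^2 ∂μ
      = ((m+1:ℕ):ℝ)^2 + ∫ z, ‖(derivative (starPoly (m+1) (φ (m+1)))).eval z‖^2 ∂μ := by
  set P := φ (m+1) with hP
  set Q := starPoly (m+1) P with hQ
  have hPdeg : P.natDegree = m+1 := Polynomial.natDegree_eq_of_degree_eq_some (hφ.deg (m+1))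
  have hQdeg : Q.natDegree ≤ m+1 := natDegree_starPoly_le hPdeg.le
  set g : ℂ → ℂ := fun z => conj (Q.eval z) * (z * (derivative Q).eval z) with hg
  set S : Polynomial ℂ := Polynomial.C ((m + 1 : ℕ) : ℂ) * P - Polynomial.X * derivative P
    with hSdef
  -- pointwise facts on the circle
  have hnsq : ∀ z : ℂ, ‖z‖ = 1 → Complex.normSq z = 1 := by
    intro z hz
    rw [Complex.normSq_eq_norm_sq, hz, one_pow]
  have hpt : ∀ z : ℂ, ‖z‖ = 1 →
      ‖(derivative P).eval z‖^2
        = ((m+1:ℕ):ℝ)^2 * ‖Q.eval z‖^2 + ‖(derivative Q).eval z‖^2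
          - 2*((m+1:ℕ):ℝ)*(g z).re := by
    intro z hz
    have e1 := circle_key m P hPdeg.le hz
    rw [← hQ] at e1
    refine aux_normsq (z^m) _ _ z _ ?_ (hnsq z hz) _ ?_
    · rw [map_pow, hnsq z hz, one_pow]
    · rw [e1]; norm_num
  -- the cross term integrates to zero
  have hSeval : ∀ z : ℂ, S.eval z = ((m+1:ℕ):ℂ) * P.eval z - z * (derivative P).eval z := by
    intro z; simp [hSdef]
  have hgconj : ∀ z : ℂ, ‖z‖ = 1 → conj (g z) = conj (P.eval z) * S.eval z := by
    intro z hz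
    have e2 := circle_key m Q hQdeg hz
    rw [show starPoly (m+1) Q = P from by rw [hQ, starPoly_starPoly]] at e2
    have hQz : Q.eval z = z^(m+1) * conj (P.eval z) := starPoly_eval hPdeg.le hz
    have hzc : z * conj z = 1 := by
      rw [Complex.mul_conj, hnsq z hz, Complex.ofReal_one]
    calc conj (g z) = Q.eval z * (conj z * conj ((derivative Q).eval z)) := by
          rw [hg]; simp only [map_mul, Complex.conj_conj]
    _ = (z * conj z) * (z^m * conj ((derivative Q).eval z)) * conj (P.eval z) := by
          rw [hQz]; ring
    _ = conj (P.eval z) * S.eval z := by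
          rw [hzc, e2, hSeval]; ring
  have hSdeg : S.natDegree ≤ m := by
    apply Polynomial.natDegree_le_iff_coeff_eq_zero.2
    intro i hi
    rcases i with _ | j
    · omega
    · rw [hSdef, Polynomial.coeff_sub, Polynomial.coeff_C_mul, Polynomial.coeff_X_mul,
        Polynomial.coeff_derivative]
      rcases eq_or_lt_of_le (by omega : m + 1 ≤ j + 1) with heq | hgt
      · have hj : m = j := by omega
        subst hj
        push_cast
        ring_nf
      · rw [Polynomial.coeff_eq_zero_of_natDegree_lt (by omega : P.natDegree < j + 1)]
        simp
  have hgint0 : ∫ z, g z ∂μ = 0 := by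
    have h1 : ∫ z, conj (g z) ∂μ = ∫ z, conj (P.eval z) * S.eval z ∂μ := by
      apply integral_congr_ae
      filter_upwards [ae_circle hcirc] with z hz using hgconj z hz
    rw [integral_conj] at h1
    rw [orth_lower hcirc hφ m S hSdeg (m+1) (by omega)] at h1
    have := congrArg conj h1
    simpa using this
  -- ‖Q‖² integrates to 1
  have hQ1 : ∫ z, ‖Q.eval z‖^2 ∂μ = 1 := by
    have h1 : ∫ z, ‖Q.eval z‖^2 ∂μ = ∫ z, ‖P.eval z‖^2 ∂μ := by
      apply integral_congr_ae
      filter_upwards [ae_circle hcirc] with z hz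
      rw [starPoly_eval hPdeg.le hz]
      rw [norm_mul, norm_pow, hz, one_pow, one_mul, RCLike.norm_conj]
    have h2 : ∫ z, ((‖P.eval z‖^2 : ℝ) : ℂ) ∂μ = 1 := by
      have := hφ.orth (m+1) (m+1)
      rw [if_pos rfl] at this
      rw [← this]
      apply integral_congr_ae
      filter_upwards with z
      rw [norm_sq_eq_normSq, ← Complex.mul_conj]
      ring
    have h3 : ∫ z, ((‖P.eval z‖^2 : ℝ) : ℂ) ∂μ = ((∫ z, ‖P.eval z‖^2 ∂μ : ℝ) : ℂ) :=
      integral_ofReal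
    rw [h3] at h2
    rw [h1]
    exact_mod_cast h2
  -- integrability
  have cg : Continuous g := by
    rw [hg]
    exact (cont_conj_eval Q).mul (continuous_id.mul (cont_eval (derivative Q)))
  have int1 : Integrable (fun z => ((m+1:ℕ):ℝ)^2 * ‖Q.eval z‖^2) μ :=
    integrable_circle hcirc (continuous_const.mul ((cont_eval Q).norm.pow 2))
  have int2 : Integrable (fun z => ‖(derivative Q).eval z‖^2) μ :=
    integrable_circle hcirc ((cont_eval (derivative Q)).norm.pow 2)
  have int3 : Integrable g μ := integrable_circle hcirc cg
  have int4 : Integrable (fun z => 2*((m+1:ℕ):ℝ)*(g z).re) μ :=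
    integrable_circle hcirc (continuous_const.mul (Complex.continuous_re.comp cg))
  calc ∫ z, ‖(derivative P).eval z‖^2 ∂μ
      = ∫ z, (((m+1:ℕ):ℝ)^2 * ‖Q.eval z‖^2 + ‖(derivative Q).eval z‖^2
          - 2*((m+1:ℕ):ℝ)*(g z).re) ∂μ := by
        apply integral_congr_ae
        filter_upwards [ae_circle hcirc] with z hz using hpt z hz
    _ = ((m+1:ℕ):ℝ)^2 + ∫ z, ‖(derivative Q).eval z‖^2 ∂μ := by
        have int12 : Integrable
            (fun z => ((m+1:ℕ):ℝ)^2 * ‖Q.eval z‖^2 + ‖(derivative Q).eval z‖^2) μ :=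
          int1.add int2
        rw [integral_sub int12 int4, integral_add int1 int2, integral_const_mul,
          integral_const_mul, hQ1]
        have : ∫ z, (g z).re ∂μ = 0 := by
          have := integral_re int3 (μ := μ)
          rw [hgint0] at this
          simpa using this
        rw [this]
        ring

end OP

/-- For a nontrivial probability measure on the unit circle,
`‖φ_n'/n‖² = 1 + ‖(φ_n^*)'/n‖²` for all `n ≥ 1`; hence `‖φ_n'/n‖ ≥ 1`, and
normality is equivalent to `‖(φ_n^*)'/n‖ → 0`. -/
theorem stmt0 (μ : Measure ℂ) [IsProbabilityMeasure μ] (hcirc : OnCircle μ)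
    (hnt : NontrivialSupport μ) (φ : ℕ → Polynomial ℂ) (hφ : IsOPUC μ φ) :
    (∀ n : ℕ, 1 ≤ n →
      (l2norm μ (derivative (φ n)) / n) ^ 2
        = 1 + (l2norm μ (derivative (starPoly n (φ n))) / n) ^ 2) ∧
    (∀ n : ℕ, 1 ≤ n → 1 ≤ l2norm μ (derivative (φ n)) / n) ∧
    (NormalBehavior μ φ ↔
      Tendsto (fun n : ℕ => l2norm μ (derivative (starPoly n (φ n))) / n)
        atTop (𝓝 0)) := by
  set x : ℕ → ℝ := fun n => l2norm μ (derivative (φ n)) / n with hx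
  set y : ℕ → ℝ := fun n => l2norm μ (derivative (starPoly n (φ n))) / n with hy
  have key : ∀ n : ℕ, 1 ≤ n →
      (l2norm μ (derivative (φ n)))^2
        = (n:ℝ)^2 + (l2norm μ (derivative (starPoly n (φ n))))^2 := by
    intro n hn
    obtain ⟨m, rfl⟩ : ∃ m, n = m + 1 := ⟨n - 1, by omega⟩
    rw [l2norm_sq, l2norm_sq]
    have := central hcirc hφ m
    push_cast at this ⊢
    exact this
  have part1 : ∀ n : ℕ, 1 ≤ n → (x n)^2 = 1 + (y n)^2 := by
    intro n hn
    have hn0 : (n:ℝ) ≠ 0 := by positivity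
    rw [hx, hy]
    simp only
    rw [div_pow, div_pow, key n hn]
    field_simp
  have hxnn : ∀ n, 0 ≤ x n := fun n => div_nonneg (l2norm_nonneg _ _) (Nat.cast_nonneg n)
  have hynn : ∀ n, 0 ≤ y n := fun n => div_nonneg (l2norm_nonneg _ _) (Nat.cast_nonneg n)
  have part2 : ∀ n : ℕ, 1 ≤ n → 1 ≤ x n := by
    intro n hn
    nlinarith [part1 n hn, hxnn n, hynn n, sq_nonneg (y n)]
  refine ⟨part1, part2, ?_⟩
  constructor
  · intro h
    have h2 : Tendsto (fun n => (x n)^2 - 1) atTop (𝓝 0) := by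
      have := (h.mul h).sub (tendsto_const_nhds (x := (1:ℝ)))
      simp only [mul_one, sub_self] at this
      convert this using 2 with n
      ring
    have h3 : Tendsto (fun n => Real.sqrt ((x n)^2 - 1)) atTop (𝓝 0) := by
      have := (Real.continuous_sqrt.tendsto 0).comp h2
      simpa [Function.comp_def] using this
    refine h3.congr' ?_
    filter_upwards [eventually_ge_atTop 1] with n hn
    rw [part1 n hn]
    simp [Real.sqrt_sq (hynn n)]
  · intro h
    have h2 : Tendsto (fun n => 1 + (y n)^2) atTop (𝓝 1) := by
      have := tendsto_const_nhds (x := (1:ℝ)) (f := atTop (α := ℕ)) |>.add ((h.mul h))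
      simp only [mul_zero, add_zero] at this
      convert this using 2 with n
      ring
    have h3 : Tendsto (fun n => Real.sqrt (1 + (y n)^2)) atTop (𝓝 1) := by
      have := (Real.continuous_sqrt.tendsto 1).comp h2
      simpa [Function.comp_def] using this
    refine h3.congr' ?_
    filter_upwards [eventually_ge_atTop 1] with n hn
    rw [← part1 n hn, Real.sqrt_sq (hxnn n)]
end
end

section
/- (Turán's inequality) Let P be a polynomial of degree n ≥ 1 all of whose zeros lie in the closed unit disk, i.e., P(z) = c·∏_{j=1}^n (z − z_j) with c ≠ 0 and |z_j| ≤ 1 for all j. Then for every θ ∈ ℝ, |P'(e^{iθ})| ≥ (n/2)·|P(e^{iθ})|. -/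
open MeasureTheory Polynomial Filter Topology ComplexConjugate

noncomputable section

lemma half_le_re (w zeta : ℂ) (hw : ‖w‖ = 1) (hz : ‖zeta‖ ≤ 1)
    (hne : w - zeta ≠ 0) : (1/2 : ℝ) ≤ (w / (w - zeta)).re := by
  have hw0 : w ≠ 0 := by
    intro h; rw [h] at hw; simp at hw
  have hu1 : zeta / w ≠ 1 := by
    intro h
    exact hne (sub_eq_zero.2 ((div_eq_one_iff_eq hw0).1 h).symm)
  have hne' : (1 : ℂ) - zeta / w ≠ 0 := by
    intro h; exact hu1 (by linear_combination -h)
  have hrew : w / (w - zeta) = (1 - zeta / w)⁻¹ := by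
    field_simp
  rw [hrew, Complex.inv_re]
  have hpos : 0 < Complex.normSq (1 - zeta / w) := Complex.normSq_pos.2 hne'
  rw [le_div_iff₀ hpos]
  have hnu : Complex.normSq (zeta / w) ≤ 1 := by
    rw [Complex.normSq_eq_norm_sq, norm_div, hw, div_one]
    nlinarith [norm_nonneg zeta]
  set a := (zeta / w).re
  set b := (zeta / w).im
  have h1 : Complex.normSq (1 - zeta / w) = (1 - a)^2 + b^2 := by
    simp [Complex.normSq_apply, Complex.sub_re, Complex.sub_im]; ring
  have h2 : ((1 : ℂ) - zeta / w).re = 1 - a := by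
    simp [Complex.sub_re]; rfl
  have h3 : Complex.normSq (zeta / w) = a^2 + b^2 := by
    rw [Complex.normSq_apply]; ring
  rw [h1, h2]
  nlinarith [h3 ▸ hnu]

lemma deriv_prod_lin (z : ℕ → ℂ) (s : Finset ℕ) :
    derivative (∏ j ∈ s, (X - Polynomial.C (z j)))
      = ∑ j ∈ s, ∏ k ∈ s.erase j, (X - Polynomial.C (z k)) := by
  induction s using Finset.induction_on with
  | empty => simp
  | @insert a s ha ih =>
    rw [Finset.prod_insert ha, derivative_mul, ih, Finset.sum_insert ha,
        Finset.erase_insert ha]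
    simp only [derivative_sub, derivative_X, derivative_C, sub_zero, one_mul]
    rw [Finset.mul_sum]
    congr 1
    refine Finset.sum_congr rfl fun j hj => ?_
    rw [Finset.erase_insert_of_ne (by rintro rfl; exact ha hj),
        Finset.prod_insert (fun h => ha (Finset.mem_of_mem_erase h))]

/-- **Turán's inequality.** If all zeros of a degree-`n` polynomial
lie in the closed unit disk, then `|P'(e^{iθ})| ≥ (n/2)|P(e^{iθ})|` on the unit circle. -/
theorem stmt2 (n : ℕ) (hn : 1 ≤ n) (c : ℂ) (hc : c ≠ 0) (z : ℕ → ℂ)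
    (hz : ∀ j ∈ Finset.range n, ‖z j‖ ≤ 1)
    (P : Polynomial ℂ)
    (hP : P = Polynomial.C c * ∏ j ∈ Finset.range n, (X - Polynomial.C (z j))) :
    ∀ θ : ℝ, (n / 2 : ℝ) * ‖P.eval (Complex.exp (θ * Complex.I))‖
      ≤ ‖(derivative P).eval (Complex.exp (θ * Complex.I))‖ := by
  intro θ
  set w := Complex.exp (θ * Complex.I) with hwdef
  have hw : ‖w‖ = 1 := Complex.norm_exp_ofReal_mul_I θ
  have hPe : P.eval w = c * ∏ j ∈ Finset.range n, (w - z j) := by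
    simp [hP, eval_prod]
  rcases eq_or_ne (P.eval w) 0 with h0 | h0
  · rw [h0]
    simp
  · have hfac : ∀ j ∈ Finset.range n, w - z j ≠ 0 := by
      intro j hj hzero
      apply h0
      rw [hPe]
      exact mul_eq_zero_of_right c (Finset.prod_eq_zero hj hzero)
    have hd : (derivative P).eval w
        = c * ∑ j ∈ Finset.range n, ∏ k ∈ (Finset.range n).erase j, (w - z k) := by
      rw [hP, derivative_C_mul, deriv_prod_lin]
      simp [eval_finset_sum, eval_prod, Finset.mul_sum]
    have key_eq : w * (derivative P).eval w
        = P.eval w * ∑ j ∈ Finset.range n, w / (w - z j) := by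
      rw [hd, hPe, Finset.mul_sum, Finset.mul_sum, Finset.mul_sum]
      refine Finset.sum_congr rfl fun j hj => ?_
      rw [← Finset.mul_prod_erase _ _ hj]
      have := hfac j hj
      field_simp
    have habs : ‖(derivative P).eval w‖
        = ‖P.eval w‖ * ‖∑ j ∈ Finset.range n, w / (w - z j)‖ := by
      have := congrArg norm key_eq
      rwa [norm_mul, norm_mul, hw, one_mul] at this
    have hre : (n / 2 : ℝ) ≤ (∑ j ∈ Finset.range n, w / (w - z j)).re := by
      rw [Complex.re_sum]
      calc (n / 2 : ℝ) = ∑ _j ∈ Finset.range n, (1/2 : ℝ) := by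
            simp [Finset.sum_const]; ring
        _ ≤ ∑ j ∈ Finset.range n, (w / (w - z j)).re :=
            Finset.sum_le_sum fun j hj => half_le_re w (z j) hw (hz j hj) (hfac j hj)
    have hre2 : (n / 2 : ℝ) ≤ ‖∑ j ∈ Finset.range n, w / (w - z j)‖ :=
      hre.trans (Complex.re_le_norm _)
    rw [habs, mul_comm]
    exact mul_le_mul_of_nonneg_left hre2 (norm_nonneg _)
end
end

section
/- Let μ be a nontrivial probability measure on the unit circle with orthonormal polynomials φ_n, and fix n ≥ 1. Then all n zeros ζ_1, …, ζ_n of φ_n (counted with multiplicity) lie in the open unit disk 𝔻, and one has ‖φ_n'/n‖²_{L²(dμ)} = (1/n²)·Σ_{j=1}^n Σ_{k=1}^n 1/(1 − conj(ζ_j)·ζ_k) = 1 + Σ_{m=1}^∞ |∫ z^m dν_n(z)|², where dν_n = (1/n)·Σ_{j=1}^n δ_{ζ_j} is the normalized zero counting measure of φ_n. -/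
open MeasureTheory Polynomial Filter Topology ComplexConjugate

noncomputable section

namespace Stmt3Proof

variable {μ : Measure ℂ}

lemma poly_bound (P : Polynomial ℂ) {z : ℂ} (hz : ‖z‖ = 1) :
    ‖P.eval z‖ ≤ ∑ k ∈ Finset.range (P.natDegree + 1), ‖P.coeff k‖ := by
  rw [Polynomial.eval_eq_sum_range]
  refine (norm_sum_le _ _).trans (Finset.sum_le_sum fun k _ => ?_)
  rw [norm_mul, norm_pow, hz, one_pow, mul_one]

lemma ae_circ (hcirc : OnCircle μ) : ∀ᵐ z ∂μ, ‖z‖ = 1 := by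
  have h : ∀ᵐ z ∂μ, z ∈ Metric.sphere (0:ℂ) 1 := by
    rw [MeasureTheory.ae_iff]
    exact hcirc
  filter_upwards [h] with z hz
  simpa [mem_sphere_zero_iff_norm] using hz

lemma integrable_cm (hcirc : OnCircle μ) [IsProbabilityMeasure μ] (P Q : Polynomial ℂ) :
    Integrable (fun z => conj (P.eval z) * Q.eval z) μ := by
  have hm : AEStronglyMeasurable (fun z => conj (P.eval z) * Q.eval z) μ :=
    ((Complex.continuous_conj.comp P.continuous).mul Q.continuous).aestronglyMeasurable
  set CP := ∑ k ∈ Finset.range (P.natDegree + 1), ‖P.coeff k‖ with hCP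
  set CQ := ∑ k ∈ Finset.range (Q.natDegree + 1), ‖Q.coeff k‖ with hCQ
  refine ⟨hm, HasFiniteIntegral.of_bounded (C := CP * CQ) ?_⟩
  filter_upwards [ae_circ hcirc] with z hz
  have h1 : ‖P.eval z‖ ≤ CP := poly_bound P hz
  have h2 : ‖Q.eval z‖ ≤ CQ := poly_bound Q hz
  calc ‖conj (P.eval z) * Q.eval z‖ = ‖P.eval z‖ * ‖Q.eval z‖ := by
        rw [norm_mul, RCLike.norm_conj]
    _ ≤ CP * CQ := mul_le_mul h1 h2 (norm_nonneg _) ((norm_nonneg _).trans h1)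

/-- The `L²(dμ)` inner product of two polynomials. -/
def ip (μ : Measure ℂ) (P Q : Polynomial ℂ) : ℂ := ∫ z, conj (P.eval z) * Q.eval z ∂μ

lemma ip_conj_symm (P Q : Polynomial ℂ) : ip μ P Q = conj (ip μ Q P) := by
  rw [ip, ip, ← integral_conj]
  congr 1; funext z
  simp only [map_mul, Complex.conj_conj]; ring

lemma ip_add_right (hcirc : OnCircle μ) [IsProbabilityMeasure μ] (P Q R : Polynomial ℂ) :
    ip μ P (Q + R) = ip μ P Q + ip μ P R := by
  rw [ip, ip, ip, ← integral_add (integrable_cm hcirc P Q) (integrable_cm hcirc P R)]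
  congr 1; funext z; simp [mul_add]

lemma ip_C_mul_right (P Q : Polynomial ℂ) (c : ℂ) :
    ip μ P (Polynomial.C c * Q) = c * ip μ P Q := by
  rw [ip, ip, ← integral_const_mul]
  congr 1; funext z; simp; ring

variable {φ : ℕ → Polynomial ℂ}

lemma phi_ne_zero (hφ : IsOPUC μ φ) (m : ℕ) : φ m ≠ 0 := by
  intro h
  have := hφ.deg m
  rw [h, Polynomial.degree_zero] at this
  exact absurd this (by simp)

lemma phi_natDegree (hφ : IsOPUC μ φ) (m : ℕ) : (φ m).natDegree = m :=
  Polynomial.natDegree_eq_of_degree_eq_some (hφ.deg m)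

lemma phi_lead_ne (hφ : IsOPUC μ φ) (m : ℕ) : (φ m).leadingCoeff ≠ 0 :=
  Polynomial.leadingCoeff_ne_zero.mpr (phi_ne_zero hφ m)

lemma ip_zero_right (P : Polynomial ℂ) : ip μ P 0 = 0 := by
  simp [ip]

lemma ip_phi_phi (hφ : IsOPUC μ φ) (m k : ℕ) :
    ip μ (φ m) (φ k) = if m = k then 1 else 0 := hφ.orth m k

lemma ip_phi_lower (hcirc : OnCircle μ) [IsProbabilityMeasure μ] (hφ : IsOPUC μ φ)
    (n : ℕ) : ∀ d : ℕ, ∀ P : Polynomial ℂ, P.natDegree ≤ d → P.degree < (n : ℕ) →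
      ip μ (φ n) P = 0 := by
  intro d
  induction d with
  | zero =>
    intro P hPd hPn
    by_cases hP0 : P = 0
    · rw [hP0]; exact ip_zero_right _
    have hn : 0 < n := by
      refine Nat.pos_of_ne_zero ?_
      rintro rfl
      rw [Polynomial.degree_eq_natDegree hP0] at hPn
      simp at hPn
    have hP : P = Polynomial.C (P.coeff 0) := Polynomial.eq_C_of_natDegree_le_zero hPd
    have hφ0 : φ 0 = Polynomial.C ((φ 0).coeff 0) :=
      Polynomial.eq_C_of_natDegree_le_zero (le_of_eq (phi_natDegree hφ 0))
    have hlc : (φ 0).coeff 0 ≠ 0 := by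
      intro h
      apply phi_ne_zero hφ 0
      rw [hφ0, h, map_zero]
    have : P = Polynomial.C (P.coeff 0 / (φ 0).coeff 0) * φ 0 := by
      conv_rhs => rw [hφ0]
      simp only [Polynomial.coeff_C_zero, ← Polynomial.C_mul]
      rw [div_mul_cancel₀ _ hlc]
      exact hP
    rw [this, ip_C_mul_right, ip_phi_phi hφ]
    simp [hn.ne']
  | succ d ih =>
    intro P hPd hPn
    by_cases hP0 : P = 0
    · rw [hP0]; exact ip_zero_right _
    by_cases hd' : P.natDegree ≤ d
    · exact ih P hd' hPn
    have hdeg : P.natDegree = d + 1 := le_antisymm hPd (by omega)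
    set m := d + 1 with hm
    have hmn : m < n := by
      have := hPn
      rw [Polynomial.degree_eq_natDegree hP0, hdeg] at this
      exact_mod_cast this
    set lc := (φ m).leadingCoeff with hlc
    have hlcne : lc ≠ 0 := phi_lead_ne hφ m
    set c := P.leadingCoeff / lc with hc
    have hcne : c ≠ 0 := div_ne_zero (Polynomial.leadingCoeff_ne_zero.mpr hP0) hlcne
    set R := P - Polynomial.C c * φ m with hR
    have hdegq : (Polynomial.C c * φ m).degree = P.degree := by
      rw [Polynomial.degree_C_mul hcne, hφ.deg m,
        Polynomial.degree_eq_natDegree hP0, hdeg]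
    have hleadq : (Polynomial.C c * φ m).leadingCoeff = P.leadingCoeff := by
      rw [Polynomial.leadingCoeff_mul, Polynomial.leadingCoeff_C, hc,
        div_mul_cancel₀ _ hlcne]
    have hRdeg : R.degree < P.degree := by
      rw [hR]
      exact Polynomial.degree_sub_lt hdegq.symm hP0 hleadq.symm
    have hRnat : R.natDegree ≤ d := by
      by_cases hR0 : R = 0
      · simp [hR0]
      have := Polynomial.natDegree_lt_natDegree hR0 hRdeg
      omega
    have hRn : R.degree < (n : ℕ) := lt_trans hRdeg (by
      rw [Polynomial.degree_eq_natDegree hP0, hdeg]; exact_mod_cast hmn)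
    have hPsum : P = R + Polynomial.C c * φ m := by rw [hR]; ring
    rw [hPsum, ip_add_right hcirc, ip_C_mul_right, ih R hRnat hRn, ip_phi_phi hφ]
    simp [hmn.ne']

lemma deriv_prod_linear {ι : Type*} [DecidableEq ι] (s : Finset ι) (a : ι → ℂ) :
    derivative (∏ i ∈ s, (X - Polynomial.C (a i)))
      = ∑ j ∈ s, ∏ i ∈ s.erase j, (X - Polynomial.C (a i)) := by
  induction s using Finset.induction_on with
  | empty => simp
  | insert b s hbs ih =>
    have key : ∀ j ∈ s, (insert b s).erase j = insert b (s.erase j) := fun j hj =>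
      Finset.erase_insert_of_ne (fun h => hbs (h ▸ hj))
    have hsum : (∑ x ∈ s, ∏ i ∈ (insert b s).erase x, (X - Polynomial.C (a i)))
        = ∑ x ∈ s, (X - Polynomial.C (a b)) * ∏ i ∈ s.erase x, (X - Polynomial.C (a i)) :=
      Finset.sum_congr rfl fun j hj => by
        rw [key j hj, Finset.prod_insert (fun h => hbs (Finset.mem_of_mem_erase h))]
    rw [Finset.prod_insert hbs, derivative_mul, ih, Finset.sum_insert hbs,
      Finset.erase_insert hbs, hsum]
    simp only [derivative_sub, derivative_X, derivative_C, sub_zero, one_mul,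
      Finset.mul_sum]

lemma exists_zeros (p : Polynomial ℂ) {n : ℕ} (hd : p.degree = n) :
    ∃ ζ : Fin n → ℂ,
      p = Polynomial.C p.leadingCoeff * ∏ j, (X - Polynomial.C (ζ j)) := by
  have hnat : p.natDegree = n := natDegree_eq_of_degree_eq_some hd
  have hcard : p.roots.card = n := by
    rw [← hnat]
    exact Polynomial.splits_iff_card_roots.mp (IsAlgClosed.splits p)
  set l := p.roots.toList with hl
  have hlen : l.length = n := by rw [hl, Multiset.length_toList, hcard]
  refine ⟨fun j => l.get (Fin.cast hlen.symm j), ?_⟩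
  have h1 : Polynomial.C p.leadingCoeff * (p.roots.map fun a => X - Polynomial.C a).prod = p :=
    Polynomial.C_leadingCoeff_mul_prod_multiset_X_sub_C (by rw [hcard, hnat])
  have h2 : (p.roots.map fun a => X - Polynomial.C a).prod
      = (l.map fun a => X - Polynomial.C a).prod := by
    conv_lhs => rw [← Multiset.coe_toList p.roots]
    rw [Multiset.map_coe, Multiset.prod_coe]
  have h3 : (l.map fun a => X - Polynomial.C a).prod
      = ∏ i : Fin l.length, (X - Polynomial.C (l.get i)) := by
    conv_lhs => rw [← List.ofFn_get l, List.map_ofFn]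
    rw [List.prod_ofFn]
    rfl
  have h4 : (∏ i : Fin l.length, (X - Polynomial.C (l.get i)))
      = ∏ j : Fin n, (X - Polynomial.C (l.get (Fin.cast hlen.symm j))) :=
    (Fin.prod_congr' (fun i => (X - Polynomial.C (l.get i))) hlen.symm).symm
  conv_lhs => rw [← h1, h2, h3, h4]

lemma conj_mul_self (w : ℂ) : conj w * w = ((‖w‖ ^ 2 : ℝ) : ℂ) := by
  rw [mul_comm, Complex.mul_conj, Complex.normSq_eq_norm_sq]

lemma integral_ofReal' {μ : Measure ℂ} (f : ℂ → ℝ) :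
    ∫ z, ((f z : ℝ) : ℂ) ∂μ = ((∫ z, f z ∂μ : ℝ) : ℂ) :=
  integral_ofReal

end Stmt3Proof

open Stmt3Proof

/-- The zeros `ζ_1, …, ζ_n` of `φ_n` all lie in the open unit disk and
`‖φ_n'/n‖² = (1/n²) Σ_{j,k} 1/(1 − conj(ζ_j) ζ_k) = 1 + Σ_{m≥1} |∫ z^m dν_n|²`,
where `ν_n` is the normalized zero counting measure. -/
theorem stmt3 (μ : Measure ℂ) [IsProbabilityMeasure μ] (hcirc : OnCircle μ)
    (hnt : NontrivialSupport μ) (φ : ℕ → Polynomial ℂ) (hφ : IsOPUC μ φ)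
    (n : ℕ) (hn : 1 ≤ n) :
    ∃ ζ : Fin n → ℂ,
      (∀ j, ‖ζ j‖ < 1) ∧
      φ n = Polynomial.C ((φ n).leadingCoeff) * ∏ j, (X - Polynomial.C (ζ j)) ∧
      ((l2norm μ (derivative (φ n)) / n) ^ 2 : ℂ)
        = ((n : ℂ) ^ 2)⁻¹ * ∑ j, ∑ k, (1 - conj (ζ j) * ζ k)⁻¹ ∧
      (l2norm μ (derivative (φ n)) / n) ^ 2
        = 1 + ∑' m : ℕ, ‖(n : ℂ)⁻¹ * ∑ j, ζ j ^ (m + 1)‖ ^ 2 := by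
  classical
  obtain ⟨ζ, hfac⟩ := exists_zeros (φ n) (hφ.deg n)
  set L := (φ n).leadingCoeff with hL
  set Q : Fin n → Polynomial ℂ :=
    fun j => Polynomial.C L * ∏ i ∈ Finset.univ.erase j, (X - Polynomial.C (ζ i)) with hQ
  have hfacj : ∀ j, φ n = (X - Polynomial.C (ζ j)) * Q j := by
    intro j
    conv_lhs => rw [hfac]
    rw [hQ, ← Finset.mul_prod_erase Finset.univ _ (Finset.mem_univ j)]
    ring
  have hXQ : ∀ j, X * Q j = φ n + Polynomial.C (ζ j) * Q j := fun j => by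
    rw [hfacj j]; ring
  -- degrees
  have hQne : ∀ j, Q j ≠ 0 := by
    intro j h
    apply phi_ne_zero hφ n
    rw [hfacj j, h, mul_zero]
  have hQdeg : ∀ j, (Q j).degree < (n : ℕ) := by
    intro j
    have h1 : ((n : ℕ) : WithBot ℕ) = 1 + ((Q j).natDegree : WithBot ℕ) := by
      conv_lhs => rw [← hφ.deg n, hfacj j]
      rw [Polynomial.degree_mul, Polynomial.degree_X_sub_C,
        Polynomial.degree_eq_natDegree (hQne j)]
    rw [Polynomial.degree_eq_natDegree (hQne j)]
    have h2 : n = 1 + (Q j).natDegree := by exact_mod_cast h1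
    exact_mod_cast (by omega : (Q j).natDegree < n)
  -- orthogonality
  have horth : ∀ P : Polynomial ℂ, P.degree < (n : ℕ) → ip μ (φ n) P = 0 := fun P hP =>
    ip_phi_lower hcirc hφ n P.natDegree P le_rfl hP
  have h11 : ip μ (φ n) (φ n) = 1 := by rw [ip_phi_phi hφ]; simp
  have hQphi0 : ∀ k, ip μ (φ n) (Q k) = 0 := fun k => horth _ (hQdeg k)
  have hphiXQ : ∀ j, ip μ (φ n) (X * Q j) = 1 := fun j => by
    rw [hXQ j, ip_add_right hcirc, ip_C_mul_right, h11, hQphi0 j, mul_zero, add_zero]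
  have hXQphi : ∀ j, ip μ (X * Q j) (φ n) = 1 := fun j => by
    rw [ip_conj_symm, hphiXQ j, map_one]
  -- the key identity
  have hkey : ∀ j k, (1 - conj (ζ j) * ζ k) * ip μ (Q j) (Q k) = 1 := by
    intro j k
    have hae : (fun z => (1 - conj (ζ j) * ζ k) * (conj ((Q j).eval z) * (Q k).eval z))
        =ᵐ[μ] fun z => conj ((X * Q j).eval z) * (φ n).eval z
          + ζ k * (conj ((φ n).eval z) * (Q k).eval z) := by
      filter_upwards [ae_circ hcirc] with z hz
      have hz1 : conj z * z = 1 := by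
        rw [conj_mul_self, hz, one_pow, Complex.ofReal_one]
      have e1 : (φ n).eval z = (z - ζ j) * (Q j).eval z := by
        rw [hfacj j]; simp
      have e2 : (φ n).eval z = (z - ζ k) * (Q k).eval z := by
        rw [hfacj k]; simp
      simp only [Polynomial.eval_mul, Polynomial.eval_X]
      nth_rewrite 1 [e2]
      nth_rewrite 1 [e1]
      simp only [map_mul, map_sub]
      linear_combination (-(conj ((Q j).eval z) * (Q k).eval z)) * hz1
    have hInt : (1 - conj (ζ j) * ζ k) * ip μ (Q j) (Q k)
        = ip μ (X * Q j) (φ n) + ζ k * ip μ (φ n) (Q k) := by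
      rw [ip, ip, ip, ← integral_const_mul, ← integral_const_mul (ζ k),
        ← integral_add (integrable_cm hcirc (X * Q j) (φ n))
          ((integrable_cm hcirc (φ n) (Q k)).const_mul (ζ k))]
      exact integral_congr_ae hae
    rw [hInt, hXQphi j, hQphi0 k, mul_zero, add_zero]
  -- diagonal : zeros in the disk
  have hIdiag : ∀ j, ip μ (Q j) (Q j) = (((∫ z, ‖(Q j).eval z‖ ^ 2 ∂μ) : ℝ) : ℂ) := by
    intro j
    rw [ip, ← integral_ofReal' (μ := μ) (fun z => ‖(Q j).eval z‖ ^ 2)]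
    congr 1; funext z
    rw [conj_mul_self]
  have hζ : ∀ j, ‖ζ j‖ < 1 := by
    intro j
    have h := hkey j j
    rw [hIdiag j, conj_mul_self] at h
    set r := ∫ z, ‖(Q j).eval z‖ ^ 2 ∂μ with hr
    have hr0 : 0 ≤ r := integral_nonneg fun z => by positivity
    have h' : (1 - ‖ζ j‖ ^ 2) * r = 1 := by
      have : (((1 - ‖ζ j‖ ^ 2) * r : ℝ) : ℂ) = ((1 : ℝ) : ℂ) := by
        push_cast at h ⊢
        linear_combination h
      exact_mod_cast this
    by_contra hcon
    push_neg at hcon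
    have h2' : (0:ℝ) ≤ ‖ζ j‖ ^ 2 - 1 := by nlinarith [norm_nonneg (ζ j)]
    nlinarith [mul_nonneg hr0 h2']
  have hne : ∀ j k, (1 : ℂ) - conj (ζ j) * ζ k ≠ 0 := by
    intro j k h
    have hlt : ‖conj (ζ j) * ζ k‖ < 1 := by
      rw [norm_mul, RCLike.norm_conj]
      nlinarith [hζ j, hζ k, norm_nonneg (ζ j), norm_nonneg (ζ k)]
    rw [sub_eq_zero] at h
    rw [← h] at hlt
    simp at hlt
  have hIjk : ∀ j k, ip μ (Q j) (Q k) = (1 - conj (ζ j) * ζ k)⁻¹ := fun j k =>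
    eq_inv_of_mul_eq_one_left (by rw [mul_comm]; exact hkey j k)
  -- derivative as sum
  have hder : derivative (φ n) = ∑ j, Q j := by
    rw [hfac, Polynomial.derivative_C_mul, deriv_prod_linear, Finset.mul_sum]
  -- the L² norm of the derivative
  set A := ∫ z, ‖(derivative (φ n)).eval z‖ ^ 2 ∂μ with hA
  have hA0 : 0 ≤ A := integral_nonneg fun z => by positivity
  have hAsum : ((A : ℝ) : ℂ) = ∑ j, ∑ k, ip μ (Q j) (Q k) := by
    rw [hA, ← integral_ofReal' (μ := μ) (fun z => ‖(derivative (φ n)).eval z‖ ^ 2)]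
    have e : (fun z => ((‖(derivative (φ n)).eval z‖ ^ 2 : ℝ) : ℂ))
        = fun z => ∑ j, ∑ k, conj ((Q j).eval z) * ((Q k).eval z) := by
      funext z
      rw [← conj_mul_self, hder, Polynomial.eval_finset_sum, map_sum,
        Finset.sum_mul_sum]
    rw [e, integral_finset_sum _ fun j _ =>
      integrable_finset_sum _ fun k _ => integrable_cm hcirc (Q j) (Q k)]
    exact Finset.sum_congr rfl fun j _ => integral_finset_sum _ fun k _ =>
      integrable_cm hcirc (Q j) (Q k)
  have hl2 : (l2norm μ (derivative (φ n))) ^ 2 = A := by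
    rw [l2norm, ← hA, ← Real.rpow_natCast (A ^ (1/2 : ℝ)) 2, ← Real.rpow_mul hA0]
    norm_num
  have hn0C : ((n : ℂ)) ≠ 0 := Nat.cast_ne_zero.mpr (by omega)
  have hn0R : ((n : ℝ)) ≠ 0 := Nat.cast_ne_zero.mpr (by omega)
  -- summability
  have hnonemp : Nonempty (Fin n) := ⟨⟨0, by omega⟩⟩
  set rr := Finset.univ.sup' Finset.univ_nonempty (fun j => ‖ζ j‖) with hrr
  have hrle : ∀ j, ‖ζ j‖ ≤ rr := fun j => by
    rw [hrr]
    exact Finset.le_sup' (fun j => ‖ζ j‖) (Finset.mem_univ j)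
  have hr0 : 0 ≤ rr := (norm_nonneg (ζ ⟨0, by omega⟩)).trans (hrle ⟨0, by omega⟩)
  have hr1 : rr < 1 := by
    rw [hrr, Finset.sup'_lt_iff]
    exact fun j _ => hζ j
  have hsb : ∀ m : ℕ, ‖∑ j, ζ j ^ m‖ ≤ n * rr ^ m := by
    intro m
    refine (norm_sum_le _ _).trans ?_
    calc (∑ j : Fin n, ‖ζ j ^ m‖) ≤ ∑ j : Fin n, rr ^ m := by
          refine Finset.sum_le_sum fun j _ => ?_
          rw [norm_pow]
          exact pow_le_pow_left₀ (norm_nonneg _) (hrle j) m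
      _ = n * rr ^ m := by simp [Finset.sum_const, mul_comm]
  have hg : Summable (fun m : ℕ => ‖∑ j, ζ j ^ m‖ ^ 2) := by
    refine Summable.of_nonneg_of_le (fun m => by positivity)
      (fun m => ?_) (((summable_geometric_of_lt_one (by positivity)
        (by nlinarith)).mul_left ((n : ℝ) ^ 2)) : Summable fun m : ℕ => (n:ℝ)^2 * (rr^2)^m)
    calc ‖∑ j, ζ j ^ m‖ ^ 2 ≤ ((n : ℝ) * rr ^ m) ^ 2 := by
          have := hsb m
          nlinarith [norm_nonneg (∑ j, ζ j ^ m)]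
      _ = (n : ℝ) ^ 2 * (rr ^ 2) ^ m := by ring
  -- complex series identity
  have hC : (∑ j, ∑ k, (1 - conj (ζ j) * ζ k)⁻¹)
      = ((∑' m : ℕ, ‖∑ j, ζ j ^ m‖ ^ 2 : ℝ) : ℂ) := by
    have hnormjk : ∀ j k : Fin n, ‖conj (ζ j) * ζ k‖ < 1 := by
      intro j k
      rw [norm_mul, RCLike.norm_conj]
      nlinarith [hζ j, hζ k, norm_nonneg (ζ j), norm_nonneg (ζ k)]
    have hgeo : ∀ j k : Fin n, (1 - conj (ζ j) * ζ k)⁻¹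
        = ∑' m : ℕ, (conj (ζ j) * ζ k) ^ m := fun j k =>
      (tsum_geometric_of_norm_lt_one (hnormjk j k)).symm
    calc (∑ j, ∑ k, (1 - conj (ζ j) * ζ k)⁻¹)
        = ∑ j, ∑ k, ∑' m : ℕ, (conj (ζ j) * ζ k) ^ m :=
          Finset.sum_congr rfl fun j _ => Finset.sum_congr rfl fun k _ => hgeo j k
      _ = ∑' m : ℕ, ∑ j, ∑ k, (conj (ζ j) * ζ k) ^ m := by
          rw [Summable.tsum_finsetSum fun j _ => summable_sum fun k _ =>
            summable_geometric_of_norm_lt_one (hnormjk j k)]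
          exact Finset.sum_congr rfl fun j _ => by
            rw [Summable.tsum_finsetSum fun k _ => summable_geometric_of_norm_lt_one (hnormjk j k)]
      _ = ∑' m : ℕ, ((‖∑ j, ζ j ^ m‖ ^ 2 : ℝ) : ℂ) := by
          refine tsum_congr fun m => ?_
          have hme : (∑ j : Fin n, ∑ k : Fin n, ((conj (ζ j) * ζ k) ^ m))
              = (∑ j : Fin n, conj (ζ j ^ m)) * ∑ k : Fin n, ζ k ^ m := by
            rw [Finset.sum_mul_sum]
            exact Finset.sum_congr rfl fun j _ => Finset.sum_congr rfl fun k _ => by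
              rw [mul_pow, map_pow]
          rw [hme, ← map_sum, conj_mul_self]
      _ = ((∑' m : ℕ, ‖∑ j, ζ j ^ m‖ ^ 2 : ℝ) : ℂ) := (Complex.ofReal_tsum _).symm
  have hAg : A = ∑' m : ℕ, ‖∑ j, ζ j ^ m‖ ^ 2 := by
    have : ((A : ℝ) : ℂ) = ((∑' m : ℕ, ‖∑ j, ζ j ^ m‖ ^ 2 : ℝ) : ℂ) := by
      rw [hAsum, ← hC]
      exact Finset.sum_congr rfl fun j _ => Finset.sum_congr rfl fun k _ => hIjk j k
    exact_mod_cast this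
  refine ⟨ζ, fun j => by exact hζ j, hfac, ?_, ?_⟩
  · -- complex identity
    have hl2C : ((l2norm μ (derivative (φ n)) : ℝ) : ℂ) ^ 2 = ((A : ℝ) : ℂ) := by
      exact_mod_cast congrArg (fun x : ℝ => ((x : ℝ) : ℂ)) hl2
    rw [div_pow, hl2C, hAsum,
      Finset.sum_congr rfl fun j _ => Finset.sum_congr rfl fun k _ => hIjk j k,
      div_eq_mul_inv, mul_comm]
  · -- real identity
    have hg0 : ‖∑ j : Fin n, ζ j ^ (0:ℕ)‖ ^ 2 = (n : ℝ) ^ 2 := by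
      simp [Finset.card_univ]
    rw [div_pow, hl2, hAg, Summable.tsum_eq_zero_add hg, hg0]
    rw [add_div, div_self (by positivity : ((n:ℝ))^2 ≠ 0)]
    congr 1
    rw [← tsum_div_const]
    refine tsum_congr fun m => ?_
    rw [norm_mul, norm_inv, Complex.norm_natCast]
    field_simp
end
end

section
/- Let μ be a nontrivial probability measure on the unit circle with normal L²-derivative behavior. Then μ is in Nevai class, that is, its Verblunsky coefficients satisfy α_n → 0 as n → ∞. -/
open MeasureTheory Polynomial Filter Topology ComplexConjugate

noncomputable section

namespace Stmt8Aux

def ipc (μ : Measure ℂ) (P Q : Polynomial ℂ) : ℂ := ∫ z, conj (P.eval z) * Q.eval z ∂μ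
def nrm2 (μ : Measure ℂ) (P : Polynomial ℂ) : ℝ := ∫ z, ‖P.eval z‖ ^ 2 ∂μ

variable {μ : Measure ℂ}

lemma ae_circ (hcirc : OnCircle μ) : ∀ᵐ z ∂μ, ‖z‖ = 1 := by
  have h : {z : ℂ | ¬ ‖z‖ = 1} = (Metric.sphere (0:ℂ) 1)ᶜ := by
    ext z; simp [Metric.mem_sphere, dist_zero_right]
  rw [ae_iff, h]; exact hcirc

lemma integrable_cont [IsFiniteMeasure μ] (hcirc : OnCircle μ) {f : ℂ → ℂ}
    (hf : Continuous f) : Integrable f μ := by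
  obtain ⟨x, -, hx⟩ := (isCompact_sphere (0:ℂ) 1).exists_isMaxOn ⟨1, by simp⟩ hf.norm.continuousOn
  refine (integrable_const ‖f x‖).mono' hf.aestronglyMeasurable ?_
  filter_upwards [ae_circ hcirc] with z hz
  exact hx (by simp [Metric.mem_sphere, dist_zero_right, hz])

lemma integrable_mul [IsFiniteMeasure μ] (hcirc : OnCircle μ) (P Q : Polynomial ℂ) :
    Integrable (fun z => conj (P.eval z) * Q.eval z) μ := by
  apply integrable_cont hcirc
  exact (continuous_star.comp P.continuous).mul Q.continuous

lemma ipc_conj (P Q : Polynomial ℂ) : ipc μ P Q = conj (ipc μ Q P) := by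
  rw [ipc, ipc, ← integral_conj]
  congr 1; funext z; rw [map_mul]; simp [mul_comm]

lemma ipc_add_right [IsFiniteMeasure μ] (hcirc : OnCircle μ) (P Q R : Polynomial ℂ) :
    ipc μ P (Q + R) = ipc μ P Q + ipc μ P R := by
  simp only [ipc, eval_add, mul_add]
  exact integral_add (integrable_mul hcirc P Q) (integrable_mul hcirc P R)

lemma ipc_sub_right [IsFiniteMeasure μ] (hcirc : OnCircle μ) (P Q R : Polynomial ℂ) :
    ipc μ P (Q - R) = ipc μ P Q - ipc μ P R := by
  simp only [ipc, eval_sub, mul_sub]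
  exact integral_sub (integrable_mul hcirc P Q) (integrable_mul hcirc P R)

lemma ipc_smul_right (P Q : Polynomial ℂ) (c : ℂ) :
    ipc μ P (Polynomial.C c * Q) = c * ipc μ P Q := by
  simp only [ipc, eval_mul, eval_C]
  rw [← integral_const_mul]; congr 1; funext z; ring

lemma ipc_add_left [IsFiniteMeasure μ] (hcirc : OnCircle μ) (P Q R : Polynomial ℂ) :
    ipc μ (P + Q) R = ipc μ P R + ipc μ Q R := by
  rw [ipc_conj, ipc_add_right hcirc, map_add, ← ipc_conj, ← ipc_conj]

lemma ipc_sub_left [IsFiniteMeasure μ] (hcirc : OnCircle μ) (P Q R : Polynomial ℂ) :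
    ipc μ (P - Q) R = ipc μ P R - ipc μ Q R := by
  rw [ipc_conj, ipc_sub_right hcirc, map_sub, ← ipc_conj, ← ipc_conj]

lemma ipc_smul_left (P Q : Polynomial ℂ) (c : ℂ) :
    ipc μ (Polynomial.C c * P) Q = conj c * ipc μ P Q := by
  rw [ipc_conj, ipc_smul_right, map_mul, ← ipc_conj]

lemma ipc_self (P : Polynomial ℂ) : ipc μ P P = (nrm2 μ P : ℂ) := by
  have h : (fun z => conj (P.eval z) * P.eval z) = fun z => ((‖P.eval z‖ ^ 2 : ℝ) : ℂ) := by
    funext z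
    rw [mul_comm, Complex.mul_conj, Complex.normSq_eq_norm_sq]
  rw [ipc, h]
  exact integral_ofReal

lemma nrm2_nonneg (P : Polynomial ℂ) : 0 ≤ nrm2 μ P :=
  integral_nonneg fun z => by positivity

section OPUC

variable {φ : ℕ → Polynomial ℂ}

lemma degree_lt_of_coeff_eq_zero {P : Polynomial ℂ} {m : ℕ} (h1 : P.degree ≤ (m : WithBot ℕ))
    (h2 : P.coeff m = 0) : P.degree < (m : WithBot ℕ) := by
  rcases lt_or_eq_of_le h1 with h | h
  · exact h
  · exfalso
    have hne : P ≠ 0 := by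
      intro h0; rw [h0, degree_zero] at h; exact (by simp : ¬ (⊥ : WithBot ℕ) = (m:WithBot ℕ)) h
    have hnd : P.natDegree = m := natDegree_eq_of_degree_eq_some h
    exact (leadingCoeff_ne_zero.mpr hne) (by rw [← coeff_natDegree, hnd]; exact h2)

lemma ipc_phi (hφ : IsOPUC μ φ) (m n : ℕ) :
    ipc μ (φ m) (φ n) = if m = n then 1 else 0 := hφ.orth m n

lemma lead_ne_zero (hφ : IsOPUC μ φ) (n : ℕ) : (φ n).leadingCoeff ≠ 0 := by
  intro h
  have := hφ.lead_re_pos n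
  rw [h] at this; simp at this

lemma coeff_self (hφ : IsOPUC μ φ) (n : ℕ) : (φ n).coeff n = (φ n).leadingCoeff := by
  have h : (φ n).natDegree = n := natDegree_eq_of_degree_eq_some (hφ.deg n)
  rw [← coeff_natDegree, h]

lemma orth_lt_aux [IsFiniteMeasure μ] (hcirc : OnCircle μ) (hφ : IsOPUC μ φ) :
    ∀ (m : ℕ) (P : Polynomial ℂ), P.degree < (m : WithBot ℕ) → ∀ n, m ≤ n → ipc μ P (φ n) = 0 := by
  intro m
  induction m with
  | zero =>
    intro P hP n _
    have hP0 : P = 0 := degree_eq_bot.mp (Nat.WithBot.lt_zero_iff.mp (by exact_mod_cast hP))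
    simp [hP0, ipc]
  | succ m ih =>
    intro P hP n hn
    have hPm : P.degree ≤ (m : WithBot ℕ) := by
      refine (degree_le_iff_coeff_zero _ _).mpr fun k hk => coeff_eq_zero_of_degree_lt (lt_of_lt_of_le hP ?_)
      have : m < k := by exact_mod_cast hk
      exact_mod_cast Nat.cast_le.mpr this
    set c : ℂ := P.coeff m / (φ m).leadingCoeff with hc
    have hCm : (Polynomial.C c * φ m).degree ≤ (m : WithBot ℕ) := by
      calc (Polynomial.C c * φ m).degree ≤ (Polynomial.C c).degree + (φ m).degree :=
            degree_mul_le _ _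
      _ ≤ 0 + (m : WithBot ℕ) := add_le_add degree_C_le (le_of_eq (hφ.deg m))
      _ = (m : WithBot ℕ) := zero_add _
    have hR : (P - Polynomial.C c * φ m).degree < (m : WithBot ℕ) := by
      apply degree_lt_of_coeff_eq_zero (le_trans (degree_sub_le _ _) (max_le hPm hCm))
      rw [coeff_sub, coeff_C_mul, coeff_self hφ, hc, div_mul_cancel₀ _ (lead_ne_zero hφ m), sub_self]
    have hd : P = Polynomial.C c * φ m + (P - Polynomial.C c * φ m) := by ring
    rw [hd, ipc_add_left hcirc, ipc_smul_left, ih _ hR n (le_trans (Nat.le_succ m) hn),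
        ipc_phi hφ, if_neg (by omega), mul_zero, add_zero]

lemma orth_right [IsFiniteMeasure μ] (hcirc : OnCircle μ) (hφ : IsOPUC μ φ)
    {P : Polynomial ℂ} {n : ℕ} (h : P.degree < (n : WithBot ℕ)) : ipc μ P (φ n) = 0 :=
  orth_lt_aux hcirc hφ n P h n le_rfl

lemma orth_left [IsFiniteMeasure μ] (hcirc : OnCircle μ) (hφ : IsOPUC μ φ)
    {P : Polynomial ℂ} {n : ℕ} (h : P.degree < (n : WithBot ℕ)) : ipc μ (φ n) P = 0 := by
  rw [ipc_conj, orth_right hcirc hφ h, map_zero]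

lemma ipc_phi_pair [IsFiniteMeasure μ] (hcirc : OnCircle μ) (hφ : IsOPUC μ φ)
    {n : ℕ} (c : ℂ) {R : Polynomial ℂ} (hR : R.degree < (n : WithBot ℕ)) :
    ipc μ (φ n) (Polynomial.C c * φ n + R) = c := by
  rw [ipc_add_right hcirc, ipc_smul_right, ipc_phi hφ, if_pos rfl, mul_one,
      orth_left hcirc hφ hR, add_zero]

lemma bessel [IsFiniteMeasure μ] (hcirc : OnCircle μ) (hφ : IsOPUC μ φ)
    (n : ℕ) (P : Polynomial ℂ) : Complex.normSq (ipc μ (φ n) P) ≤ nrm2 μ P := by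
  set c := ipc μ (φ n) P with hc
  have hPphi : ipc μ P (φ n) = conj c := by rw [hc, ← ipc_conj]
  have h1 : ipc μ (P - Polynomial.C c * φ n) (P - Polynomial.C c * φ n)
      = (nrm2 μ P : ℂ) - (Complex.normSq c : ℝ) := by
    rw [ipc_sub_right hcirc, ipc_sub_left hcirc, ipc_sub_left hcirc, ipc_smul_left,
        ipc_smul_left, ipc_smul_right, ipc_smul_right, ipc_phi hφ, if_pos rfl, ← hc,
        hPphi, ipc_self, Complex.normSq_eq_conj_mul_self]
    ring
  rw [ipc_self] at h1
  have h2 : nrm2 μ (P - Polynomial.C c * φ n) = nrm2 μ P - Complex.normSq c := by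
    exact_mod_cast h1
  have h3 := nrm2_nonneg (μ := μ) (P - Polynomial.C c * φ n)
  linarith

/-- real leading coefficient -/
def kk (φ : ℕ → Polynomial ℂ) (n : ℕ) : ℝ := ((φ n).leadingCoeff).re

lemma lead_eq (hφ : IsOPUC μ φ) (n : ℕ) : (φ n).leadingCoeff = ((kk φ n : ℝ) : ℂ) :=
  Complex.ext rfl (by simpa [kk] using hφ.lead_im_zero n)

lemma kk_pos (hφ : IsOPUC μ φ) (n : ℕ) : 0 < kk φ n := hφ.lead_re_pos n

lemma monic_eq (hφ : IsOPUC μ φ) (n : ℕ) :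
    monicOP φ n = Polynomial.C (((kk φ n : ℝ) : ℂ))⁻¹ * φ n := by
  rw [monicOP, lead_eq hφ]

lemma nrm2_monic [IsFiniteMeasure μ] (hcirc : OnCircle μ) (hφ : IsOPUC μ φ) (n : ℕ) :
    nrm2 μ (monicOP φ n) = ((kk φ n) ^ 2)⁻¹ := by
  have h : ipc μ (monicOP φ n) (monicOP φ n) = (((kk φ n) ^ 2)⁻¹ : ℝ) := by
    rw [monic_eq hφ, ipc_smul_left, ipc_smul_right, ipc_phi hφ, if_pos rfl, mul_one]
    rw [← Complex.ofReal_inv, Complex.conj_ofReal]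
    push_cast
    ring
  rw [ipc_self] at h
  exact_mod_cast h

lemma ipc_phi_Xpow [IsFiniteMeasure μ] (hcirc : OnCircle μ) (hφ : IsOPUC μ φ) (n : ℕ) :
    ipc μ (φ n) (Polynomial.X ^ n) = (((kk φ n : ℝ) : ℂ))⁻¹ := by
  set κ : ℂ := ((kk φ n : ℝ) : ℂ) with hκ
  have hκ0 : κ ≠ 0 := by
    rw [hκ]; exact_mod_cast (ne_of_gt (kk_pos hφ n))
  have hXd : (Polynomial.X ^ n : Polynomial ℂ).degree ≤ (n : WithBot ℕ) := le_of_eq (degree_X_pow n)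
  have hCm : (Polynomial.C κ⁻¹ * φ n).degree ≤ (n : WithBot ℕ) := by
    calc (Polynomial.C κ⁻¹ * φ n).degree ≤ (Polynomial.C κ⁻¹).degree + (φ n).degree :=
          degree_mul_le _ _
    _ ≤ 0 + (n : WithBot ℕ) := add_le_add degree_C_le (le_of_eq (hφ.deg n))
    _ = (n : WithBot ℕ) := zero_add _
  have hR : ((Polynomial.X ^ n : Polynomial ℂ) - Polynomial.C κ⁻¹ * φ n).degree < (n : WithBot ℕ) := by
    apply degree_lt_of_coeff_eq_zero (le_trans (degree_sub_le _ _) (max_le hXd hCm))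
    rw [coeff_sub, coeff_C_mul, coeff_self hφ, lead_eq hφ, ← hκ, coeff_X_pow, if_pos rfl,
        inv_mul_cancel₀ hκ0, sub_self]
  have hdec : (Polynomial.X ^ n : Polynomial ℂ)
      = Polynomial.C κ⁻¹ * φ n + ((Polynomial.X ^ n : Polynomial ℂ) - Polynomial.C κ⁻¹ * φ n) := by
    ring
  have h1 : ipc μ (Polynomial.X ^ n) (φ n) = conj κ⁻¹ := by
    rw [hdec, ipc_add_left hcirc, ipc_smul_left, ipc_phi hφ, if_pos rfl, mul_one,
        orth_right hcirc hφ hR, add_zero]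
  rw [ipc_conj, h1, ← Complex.ofReal_inv, Complex.conj_ofReal, Complex.conj_ofReal,
      Complex.ofReal_inv]

lemma deriv_bound [IsFiniteMeasure μ] (hcirc : OnCircle μ) (hφ : IsOPUC μ φ) (n : ℕ) :
    (((n:ℝ)+1) * kk φ (n+1) / kk φ n) ^ 2 ≤ nrm2 μ (derivative (φ (n+1))) := by
  set cr : ℝ := ((n:ℝ)+1) * kk φ (n+1) / kk φ n with hcr
  set c : ℂ := (cr : ℂ) with hcdef
  set D : Polynomial ℂ := derivative (φ (n+1)) with hD
  have hkn : (kk φ n : ℝ) ≠ 0 := ne_of_gt (kk_pos hφ n)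
  have hnd1 : (φ (n+1)).natDegree = n+1 := natDegree_eq_of_degree_eq_some (hφ.deg (n+1))
  have hDdeg : D.degree ≤ (n : WithBot ℕ) := by
    refine le_trans degree_le_natDegree ?_
    have := natDegree_derivative_le (φ (n+1))
    rw [hnd1] at this
    exact_mod_cast Nat.cast_le.mpr this
  have hDcoeff : D.coeff n = ((n:ℂ)+1) * ((kk φ (n+1) : ℝ) : ℂ) := by
    rw [hD, coeff_derivative]
    have : (φ (n+1)).coeff (n+1) = ((kk φ (n+1) : ℝ) : ℂ) := by
      rw [coeff_self hφ, lead_eq hφ]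
    rw [this]; ring
  have hCm : (Polynomial.C c * φ n).degree ≤ (n : WithBot ℕ) := by
    calc (Polynomial.C c * φ n).degree ≤ (Polynomial.C c).degree + (φ n).degree :=
          degree_mul_le _ _
    _ ≤ 0 + (n : WithBot ℕ) := add_le_add degree_C_le (le_of_eq (hφ.deg n))
    _ = (n : WithBot ℕ) := zero_add _
  have hR : (D - Polynomial.C c * φ n).degree < (n : WithBot ℕ) := by
    apply degree_lt_of_coeff_eq_zero (le_trans (degree_sub_le _ _) (max_le hDdeg hCm))
    rw [coeff_sub, coeff_C_mul, coeff_self hφ, lead_eq hφ, hDcoeff, hcdef, hcr]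
    have hknC : ((kk φ n : ℝ) : ℂ) ≠ 0 := by exact_mod_cast hkn
    push_cast
    rw [div_mul_cancel₀ _ hknC, sub_self]
  have hkey : ipc μ (φ n) D = c := by
    have hdec : D = Polynomial.C c * φ n + (D - Polynomial.C c * φ n) := by ring
    rw [hdec, ipc_phi_pair hcirc hφ c hR]
  have hb := bessel hcirc hφ n D
  rw [hkey, hcdef, Complex.normSq_ofReal] at hb
  calc cr ^ 2 = cr * cr := sq cr
  _ ≤ nrm2 μ D := hb

lemma degree_le_of_lt_succ {P : Polynomial ℂ} {n : ℕ} (h : P.degree < ((n+1 : ℕ) : WithBot ℕ)) :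
    P.degree ≤ (n : WithBot ℕ) := by
  refine (degree_le_iff_coeff_zero _ _).mpr fun k hk =>
    coeff_eq_zero_of_degree_lt (lt_of_lt_of_le h ?_)
  have hnk : n < k := by exact_mod_cast hk
  exact_mod_cast Nat.cast_le.mpr hnk

lemma coeff_monic (hφ : IsOPUC μ φ) (m : ℕ) : (monicOP φ m).coeff m = 1 := by
  rw [monic_eq hφ, coeff_C_mul, coeff_self hφ, lead_eq hφ, inv_mul_cancel₀]
  exact_mod_cast ne_of_gt (kk_pos hφ m)

lemma degree_monic_le (hφ : IsOPUC μ φ) (m : ℕ) : (monicOP φ m).degree ≤ (m : WithBot ℕ) := by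
  rw [monic_eq hφ]
  calc (Polynomial.C (((kk φ m : ℝ):ℂ))⁻¹ * φ m).degree
      ≤ (Polynomial.C (((kk φ m : ℝ):ℂ))⁻¹).degree + (φ m).degree := degree_mul_le _ _
  _ ≤ 0 + (m : WithBot ℕ) := add_le_add degree_C_le (le_of_eq (hφ.deg m))
  _ = (m : WithBot ℕ) := zero_add _

lemma orth_monic_right [IsFiniteMeasure μ] (hcirc : OnCircle μ) (hφ : IsOPUC μ φ)
    {P : Polynomial ℂ} {m : ℕ} (h : P.degree < (m : WithBot ℕ)) :
    ipc μ P (monicOP φ m) = 0 := by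
  rw [monic_eq hφ, ipc_smul_right, orth_right hcirc hφ h, mul_zero]

lemma natDegree_starPoly_le {P : Polynomial ℂ} {n : ℕ} (hP : P.natDegree ≤ n) :
    (starPoly n P).natDegree ≤ n := by
  refine natDegree_le_iff_coeff_eq_zero.mpr fun N hN => ?_
  rw [starPoly, coeff_reflect, revAt_eq_self_of_lt hN, coeff_map,
      coeff_eq_zero_of_natDegree_lt (lt_of_le_of_lt hP hN), map_zero]

lemma coeff_starPoly {P : Polynomial ℂ} {n : ℕ} :
    (starPoly n P).coeff n = conj (P.eval 0) := by
  rw [starPoly, coeff_reflect, revAt_le le_rfl, Nat.sub_self, coeff_map,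
      coeff_zero_eq_eval_zero]

lemma starPoly_eval {P : Polynomial ℂ} {n : ℕ} (hP : P.natDegree ≤ n) {z : ℂ}
    (hz : ‖z‖ = 1) : (starPoly n P).eval z = z ^ n * conj (P.eval z) := by
  have hz0 : z ≠ 0 := by intro h; rw [h] at hz; simp at hz
  rw [eval_eq_sum_range' (Nat.lt_succ_of_le (natDegree_starPoly_le hP)) z,
      eval_eq_sum_range' (Nat.lt_succ_of_le hP) z]
  have key : ∀ j ∈ Finset.range (n+1),
      (starPoly n P).coeff (n - j) * z ^ (n - j)
        = conj (P.coeff j * z ^ j) * z ^ n := by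
    intro j hj
    have hjn : j ≤ n := Nat.lt_succ_iff.mp (Finset.mem_range.mp hj)
    have h1 : (starPoly n P).coeff (n - j) = conj (P.coeff j) := by
      rw [starPoly, coeff_reflect, revAt_le (Nat.sub_le n j), Nat.sub_sub_self hjn, coeff_map]
    have h2 : z ^ (n - j) = z ^ n * (conj z) ^ j := by
      rw [← Complex.inv_eq_conj hz, inv_pow, ← pow_sub₀ z hz0 hjn]
    rw [h1, h2, map_mul, map_pow]
    ring
  calc ∑ i ∈ Finset.range (n+1), (starPoly n P).coeff i * z ^ i
      = ∑ j ∈ Finset.range (n+1), (starPoly n P).coeff (n - j) * z ^ (n - j) := by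
        rw [← Finset.sum_range_reflect (fun i => (starPoly n P).coeff i * z ^ i) (n+1)]
        simp
    _ = ∑ j ∈ Finset.range (n+1), conj (P.coeff j * z ^ j) * z ^ n :=
        Finset.sum_congr rfl key
    _ = z ^ n * conj (∑ i ∈ Finset.range (n+1), P.coeff i * z ^ i) := by
        rw [map_sum, Finset.mul_sum]
        exact Finset.sum_congr rfl fun j _ => by ring

lemma szego_bound [IsFiniteMeasure μ] (hcirc : OnCircle μ) (hφ : IsOPUC μ φ) (n : ℕ) :
    ((kk φ (n+1)) ^ 2)⁻¹ ≤ (1 - Complex.normSq (verblunsky φ n)) * ((kk φ n) ^ 2)⁻¹ := by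
  set ψ : Polynomial ℂ := monicOP φ (n+1) - Polynomial.X * monicOP φ n with hψdef
  have hXM : (Polynomial.X * monicOP φ n).degree ≤ ((n+1 : ℕ) : WithBot ℕ) := by
    calc (Polynomial.X * monicOP φ n).degree
        ≤ (Polynomial.X : Polynomial ℂ).degree + (monicOP φ n).degree := degree_mul_le _ _
    _ ≤ 1 + (n : WithBot ℕ) := add_le_add degree_X_le (degree_monic_le hφ n)
    _ = ((n+1 : ℕ) : WithBot ℕ) := by
        rw [show ((n+1 : ℕ) : WithBot ℕ) = ((1 + n : ℕ) : WithBot ℕ) by rw [Nat.add_comm]]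
        push_cast; rfl
  have hψdeg1 : ψ.degree < ((n+1 : ℕ) : WithBot ℕ) := by
    apply degree_lt_of_coeff_eq_zero
        (le_trans (degree_sub_le _ _) (max_le (degree_monic_le hφ (n+1)) hXM))
    rw [coeff_sub, coeff_monic hφ, coeff_X_mul, coeff_monic hφ, sub_self]
  have hψdeg : ψ.degree ≤ (n : WithBot ℕ) := degree_le_of_lt_succ hψdeg1
  have hψnat : ψ.natDegree ≤ n := natDegree_le_iff_degree_le.mpr hψdeg
  have hψlt : ψ.degree < ((n+1 : ℕ) : WithBot ℕ) := hψdeg1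
  have hsplit : monicOP φ (n+1) = Polynomial.X * monicOP φ n + ψ := by rw [hψdef]; ring
  have e1 : ipc μ ψ (monicOP φ (n+1)) = 0 := orth_monic_right hcirc hφ hψlt
  have e4 : ipc μ (Polynomial.X * monicOP φ n) (Polynomial.X * monicOP φ n)
      = ipc μ (monicOP φ n) (monicOP φ n) := by
    rw [ipc, ipc]
    apply integral_congr_ae
    filter_upwards [ae_circ hcirc] with z hz
    have hz1 : conj z * z = 1 := by
      rw [mul_comm, Complex.mul_conj, Complex.normSq_eq_norm_sq, hz]; norm_num
    simp only [eval_mul, eval_X, map_mul]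
    linear_combination (conj ((monicOP φ n).eval z) * (monicOP φ n).eval z) * hz1
  have e5 : ipc μ ψ (Polynomial.X * monicOP φ n) = - (nrm2 μ ψ : ℂ) := by
    have hXM' : Polynomial.X * monicOP φ n = monicOP φ (n+1) - ψ := by rw [hψdef]; ring
    rw [hXM', ipc_sub_right hcirc, e1, ipc_self, zero_sub]
  have key : (nrm2 μ (monicOP φ (n+1)) : ℂ) = (nrm2 μ (monicOP φ n) : ℂ) - (nrm2 μ ψ : ℂ) := by
    calc (nrm2 μ (monicOP φ (n+1)) : ℂ)
        = ipc μ (monicOP φ (n+1)) (monicOP φ (n+1)) := (ipc_self _).symm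
    _ = ipc μ (Polynomial.X * monicOP φ n + ψ) (monicOP φ (n+1)) := by rw [← hsplit]
    _ = ipc μ (Polynomial.X * monicOP φ n) (monicOP φ (n+1)) + ipc μ ψ (monicOP φ (n+1)) :=
        ipc_add_left hcirc _ _ _
    _ = ipc μ (Polynomial.X * monicOP φ n) (Polynomial.X * monicOP φ n + ψ) := by
        rw [e1, add_zero, ← hsplit]
    _ = ipc μ (Polynomial.X * monicOP φ n) (Polynomial.X * monicOP φ n)
          + ipc μ (Polynomial.X * monicOP φ n) ψ := ipc_add_right hcirc _ _ _
    _ = ipc μ (monicOP φ n) (monicOP φ n) + conj (ipc μ ψ (Polynomial.X * monicOP φ n)) := by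
        rw [e4, ipc_conj (Polynomial.X * monicOP φ n) ψ]
    _ = (nrm2 μ (monicOP φ n) : ℂ) - (nrm2 μ ψ : ℂ) := by
        rw [ipc_self, e5, map_neg, Complex.conj_ofReal]; ring
  have keyR : nrm2 μ (monicOP φ (n+1)) = nrm2 μ (monicOP φ n) - nrm2 μ ψ := by exact_mod_cast key
  have hψ0 : ψ.eval 0 = -conj (verblunsky φ n) := by
    simp [hψdef, verblunsky]
  have hnsq : Complex.normSq (ψ.eval 0) = Complex.normSq (verblunsky φ n) := by
    rw [hψ0, Complex.normSq_neg, Complex.normSq_conj]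
  have hstar : nrm2 μ (starPoly n ψ) = nrm2 μ ψ := by
    rw [nrm2, nrm2]
    apply integral_congr_ae
    filter_upwards [ae_circ hcirc] with z hz
    rw [starPoly_eval hψnat hz, norm_mul, norm_pow, hz, one_pow, one_mul, RCLike.norm_conj]
  have hipc : ipc μ (φ n) (starPoly n ψ) = conj (ψ.eval 0) * (((kk φ n : ℝ) : ℂ))⁻¹ := by
    have hdeg : (starPoly n ψ - Polynomial.C (conj (ψ.eval 0)) * Polynomial.X ^ n).degree
        < (n : WithBot ℕ) := by
      apply degree_lt_of_coeff_eq_zero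
      · refine le_trans (degree_sub_le _ _) (max_le ?_ ?_)
        · refine le_trans degree_le_natDegree ?_
          exact_mod_cast Nat.cast_le.mpr (natDegree_starPoly_le hψnat)
        · calc (Polynomial.C (conj (ψ.eval 0)) * Polynomial.X ^ n).degree
              ≤ (Polynomial.C (conj (ψ.eval 0))).degree + (Polynomial.X ^ n : Polynomial ℂ).degree :=
                degree_mul_le _ _
          _ ≤ 0 + (n : WithBot ℕ) := add_le_add degree_C_le (le_of_eq (degree_X_pow n))
          _ = (n : WithBot ℕ) := zero_add _
      · rw [coeff_sub, coeff_C_mul, coeff_X_pow, if_pos rfl, mul_one, coeff_starPoly, sub_self]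
    have hdec : starPoly n ψ = Polynomial.C (conj (ψ.eval 0)) * Polynomial.X ^ n
        + (starPoly n ψ - Polynomial.C (conj (ψ.eval 0)) * Polynomial.X ^ n) := by ring
    rw [hdec, ipc_add_right hcirc, ipc_smul_right, ipc_phi_Xpow hcirc hφ,
        orth_left hcirc hφ hdeg, add_zero]
  have hψlow : Complex.normSq (verblunsky φ n) * ((kk φ n) ^ 2)⁻¹ ≤ nrm2 μ ψ := by
    have hb := bessel hcirc hφ n (starPoly n ψ)
    rw [hipc, hstar] at hb
    have hval : Complex.normSq (conj (ψ.eval 0) * (((kk φ n : ℝ) : ℂ))⁻¹)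
        = Complex.normSq (verblunsky φ n) * ((kk φ n) ^ 2)⁻¹ := by
      rw [Complex.normSq_mul, Complex.normSq_conj, hnsq, Complex.normSq_inv,
          Complex.normSq_ofReal, ← sq]
    rw [hval] at hb
    exact hb
  rw [nrm2_monic hcirc hφ, nrm2_monic hcirc hφ] at keyR
  have hr : (1 - Complex.normSq (verblunsky φ n)) * ((kk φ n) ^ 2)⁻¹
      = ((kk φ n) ^ 2)⁻¹ - Complex.normSq (verblunsky φ n) * ((kk φ n) ^ 2)⁻¹ := by ring
  rw [hr]
  linarith

end OPUC

end Stmt8Aux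

open Stmt8Aux in
theorem stmt8_aux (μ : Measure ℂ) [IsProbabilityMeasure μ] (hcirc : OnCircle μ)
    (φ : ℕ → Polynomial ℂ) (hφ : IsOPUC μ φ)
    (hnormal : NormalBehavior μ φ) :
    Filter.Tendsto (fun n : ℕ => verblunsky φ n) Filter.atTop (nhds 0) := by
  have hsnonneg : ∀ n : ℕ, 0 ≤ Complex.normSq (verblunsky φ n) :=
    fun n => Complex.normSq_nonneg _
  have hpos : ∀ n : ℕ, 0 < 1 - Complex.normSq (verblunsky φ n) := by
    intro n
    have h := szego_bound hcirc hφ n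
    have h1 : 0 < ((kk φ (n+1)) ^ 2)⁻¹ := by
      have := kk_pos hφ (n+1); positivity
    have h2 : 0 < ((kk φ n) ^ 2)⁻¹ := by
      have := kk_pos hφ n; positivity
    nlinarith
  have h2 : ∀ n : ℕ, 1 / (1 - Complex.normSq (verblunsky φ n))
      ≤ nrm2 μ (derivative (φ (n+1))) / ((n:ℝ)+1) ^ 2 := by
    intro n
    have hsz := szego_bound hcirc hφ n
    have hdb := deriv_bound hcirc hφ n
    have hk1 := kk_pos hφ (n+1)
    have hk0 := kk_pos hφ n
    have hp := hpos n
    set A : ℝ := (kk φ (n+1)) ^ 2 with hA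
    set B : ℝ := (kk φ n) ^ 2 with hB
    have hApos : 0 < A := by positivity
    have hBpos : 0 < B := by positivity
    have hBA : B ≤ (1 - Complex.normSq (verblunsky φ n)) * A := by
      have hmul := mul_le_mul_of_nonneg_left hsz (le_of_lt (mul_pos hApos hBpos))
      calc B = (A * B) * A⁻¹ := by field_simp
      _ ≤ (A * B) * ((1 - Complex.normSq (verblunsky φ n)) * B⁻¹) := hmul
      _ = (1 - Complex.normSq (verblunsky φ n)) * A := by field_simp
    have step1 : 1 / (1 - Complex.normSq (verblunsky φ n)) ≤ A / B := by
      rw [div_le_div_iff₀ hp hBpos]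
      nlinarith
    have hsq : (((n:ℝ)+1) * kk φ (n+1) / kk φ n) ^ 2 = ((n:ℝ)+1) ^ 2 * (A / B) := by
      rw [hA, hB]; field_simp
    have step2 : A / B ≤ nrm2 μ (derivative (φ (n+1))) / ((n:ℝ)+1) ^ 2 := by
      rw [le_div_iff₀ (by positivity : (0:ℝ) < ((n:ℝ)+1) ^ 2)]
      calc A / B * ((n:ℝ)+1) ^ 2 = ((n:ℝ)+1) ^ 2 * (A / B) := by ring
      _ = (((n:ℝ)+1) * kk φ (n+1) / kk φ n) ^ 2 := hsq.symm
      _ ≤ nrm2 μ (derivative (φ (n+1))) := hdb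
    exact le_trans step1 step2
  have hl2 : ∀ n : ℕ, (l2norm μ (derivative (φ n)) / n) * (l2norm μ (derivative (φ n)) / n)
      = nrm2 μ (derivative (φ n)) / (n:ℝ) ^ 2 := by
    intro n
    rw [div_mul_div_comm, ← sq, ← sq]
    congr 1
    have h0 : 0 ≤ nrm2 μ (derivative (φ n)) := nrm2_nonneg _
    have hl : l2norm μ (derivative (φ n)) = (nrm2 μ (derivative (φ n))) ^ ((1:ℝ)/2) := rfl
    rw [hl, ← Real.rpow_natCast ((nrm2 μ (derivative (φ n))) ^ ((1:ℝ)/2)) 2,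
        ← Real.rpow_mul h0]
    norm_num
  have hT : Tendsto (fun n : ℕ => nrm2 μ (derivative (φ n)) / (n:ℝ) ^ 2) atTop (𝓝 1) := by
    have hmm := hnormal.mul hnormal
    rw [mul_one] at hmm
    have heq : (fun n : ℕ => (l2norm μ (derivative (φ n)) / n) * (l2norm μ (derivative (φ n)) / n))
        = fun n : ℕ => nrm2 μ (derivative (φ n)) / (n:ℝ) ^ 2 := funext hl2
    rwa [heq] at hmm
  have hT1 : Tendsto (fun n : ℕ => nrm2 μ (derivative (φ (n+1))) / ((n:ℝ)+1) ^ 2) atTop (𝓝 1) := by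
    have hcomp := hT.comp (tendsto_add_atTop_nat 1)
    have heq : ((fun n : ℕ => nrm2 μ (derivative (φ n)) / (n:ℝ) ^ 2) ∘ (fun n => n + 1))
        = fun n : ℕ => nrm2 μ (derivative (φ (n+1))) / ((n:ℝ)+1) ^ 2 := by
      funext n; simp [Function.comp]
    rwa [heq] at hcomp
  have hone : ∀ n : ℕ, 1 ≤ 1 / (1 - Complex.normSq (verblunsky φ n)) := by
    intro n
    rw [le_div_iff₀ (hpos n)]
    have := hsnonneg n; linarith
  have hMid : Tendsto (fun n : ℕ => 1 / (1 - Complex.normSq (verblunsky φ n))) atTop (𝓝 1) :=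
    tendsto_of_tendsto_of_tendsto_of_le_of_le tendsto_const_nhds hT1 hone h2
  have hS : Tendsto (fun n : ℕ => Complex.normSq (verblunsky φ n)) atTop (𝓝 0) := by
    have hinv := hMid.inv₀ one_ne_zero
    rw [inv_one] at hinv
    have hsub := (tendsto_const_nhds (x := (1:ℝ)) (f := atTop (α := ℕ))).sub hinv
    rw [sub_self] at hsub
    have heq : (fun n : ℕ => (1:ℝ) - (1 / (1 - Complex.normSq (verblunsky φ n)))⁻¹)
        = fun n : ℕ => Complex.normSq (verblunsky φ n) := by
      funext n; rw [one_div, inv_inv]; ring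
    rwa [heq] at hsub
  rw [tendsto_zero_iff_norm_tendsto_zero]
  have hsqrt := (Real.continuous_sqrt.tendsto 0).comp hS
  rw [Real.sqrt_zero] at hsqrt
  have heq : (Real.sqrt ∘ fun n : ℕ => Complex.normSq (verblunsky φ n))
      = fun n : ℕ => ‖verblunsky φ n‖ := by
    funext n
    simp only [Function.comp]
    rw [Complex.normSq_eq_norm_sq, Real.sqrt_sq (norm_nonneg _)]
  rwa [heq] at hsqrt

/-- Normal `L²`-derivative behavior implies Nevai class: `α_n → 0`. -/
theorem stmt8 (μ : Measure ℂ) [IsProbabilityMeasure μ] (hcirc : OnCircle μ)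
    (hnt : NontrivialSupport μ) (φ : ℕ → Polynomial ℂ) (hφ : IsOPUC μ φ)
    (hnormal : NormalBehavior μ φ) :
    Tendsto (fun n : ℕ => verblunsky φ n) atTop (𝓝 0) := by
  exact stmt8_aux μ hcirc φ hφ hnormal
end
end
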